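/- Almost-sure summability of products of score approximation errors for GARCH (Lemma A.9 of the paper, first claim, conditional form): Assume (i) there are constants M_d such that for every real d ≥ 1, every t ≥ 1, and every coordinate index i: E[ sup_{θ∈N} (X_t²/S_t(θ))^d ] ≤ M_d and E[ sup_{θ∈N} |(∂S_t/∂θ_i)(θ)/S_t(θ)|^d ] ≤ M_d; and (ii) there exist constants K ≥ 0 and ρ ∈ (0,1) such that almost surely, for every t ≥ 1 and every i: sup_{θ∈N} |(∂S_t/∂θ_i)(θ) − (∂S̃_t/∂θ_i)(θ)| ≤ K ρ^t and sup_{θ∈N} |1/S_t(θ) − 1/S̃_t(θ)| ≤ K ρ^t / S_t(θ). Then for all coordinate indices i, j, almost surely Σ_{t=1}^∞ sup_{θ∈N} | (∂l_t/∂θ_i)(θ)(∂l_t/∂θ_j)(θ) − (∂l̃_t/∂θ_i)(θ)(∂l̃_t/∂θ_j)(θ) | < ∞. -/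

import Mathlib

set_option maxHeartbeats 1000000

open MeasureTheory ProbabilityTheory Filter Topology
open scoped ENNReal

/-- The `θᵢ`-score of the Gaussian quasi-log-likelihood
`l(θ) = -(1/2)(log S(θ) + X²/S(θ))`, namely
`∂l/∂θᵢ = (1/2)(X²/S − 1)(∂S/∂θᵢ)/S`. -/
noncomputable def garchScore {Ω : Type*} {m : ℕ} (X : Ω → ℝ)
    (S : (Fin m → ℝ) → Ω → ℝ) (i : Fin m) (θ : Fin m → ℝ) (ω : Ω) : ℝ :=
  (1 / 2) * (X ω ^ 2 / S θ ω - 1) *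
    (fderiv ℝ (fun θ' => S θ' ω) θ (Pi.single i 1) / S θ ω)


/-- Generic product-difference bound. -/
lemma abs_prod_diff (p q p' q' : ℝ) :
    |p*q - p'*q'| ≤ |p| * |q - q'| + |p - p'| * |q'| := by
  have h : p*q - p'*q' = p*(q - q') + (p - p')*q' := by ring
  rw [h]
  calc |p*(q - q') + (p - p')*q'| ≤ |p*(q - q')| + |(p - p')*q'| := abs_add_le _ _
    _ = |p| * |q - q'| + |p - p'| * |q'| := by rw [abs_mul, abs_mul]

lemma quart_bound (u : ℝ) (hu : 0 ≤ u) : (u+1)^4 ≤ 8*(u^4+1) := by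
  have e1 : (u+1)^2 ≤ 2*(u^2+1) := by nlinarith [sq_nonneg (u-1)]
  have e2 : (u+1)^4 ≤ (2*(u^2+1))^2 := by
    calc (u+1)^4 = ((u+1)^2)^2 := by ring
      _ ≤ (2*(u^2+1))^2 := by
        apply pow_le_pow_left₀ (by positivity) e1
  nlinarith [sq_nonneg (u^2-1)]

lemma core_ineq {K ε q a a' bi bi' bj bj' : ℝ}
    (hK : 0 ≤ K) (hε0 : 0 ≤ ε) (hεK : ε ≤ K) (hq0 : 0 < q)
    (ha : 0 ≤ a) (ha' : 0 ≤ a')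
    (haa' : |a - a'| ≤ ε*a)
    (hbibi' : |bi - bi'| ≤ ε * |bi| + ε*q) (hbjbj' : |bj - bj'| ≤ ε * |bj| + ε*q) :
    |(1/2*(a-1)*bi)*(1/2*(a-1)*bj) - (1/2*(a'-1)*bi')*(1/2*(a'-1)*bj')|
      ≤ ε * (48*(1+K)^3*(1+q)^3) * (a^4 + |bi|^4 + |bj|^4 + 1) := by
  obtain ⟨c, hc_def⟩ : ∃ c : ℝ, c = (1+K)*(1+q) := ⟨_, rfl⟩
  have hc1 : 1 ≤ c := by nlinarith
  have hc0 : 0 ≤ c := by linarith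
  have ha'le : a' ≤ (1+K)*a := by
    have h := (abs_le.1 haa').1
    nlinarith
  have hble : ∀ b b' : ℝ, |b - b'| ≤ ε * |b| + ε*q → |b'| ≤ (1+K)*(1+q)*(|b|+1) := by
    intro b b' hb
    have h := abs_sub_abs_le_abs_sub b' b
    rw [abs_sub_comm] at h
    nlinarith [abs_nonneg b, mul_nonneg hK (abs_nonneg b), mul_nonneg hq0.le (abs_nonneg b),
      mul_nonneg (mul_nonneg hK hq0.le) (abs_nonneg b), mul_nonneg hK hq0.le]
  have hbi'le := hble bi bi' hbibi'
  have hbj'le := hble bj bj' hbjbj'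
  -- score bounds
  have hscore : ∀ b : ℝ, |1/2*(a-1)*b| ≤ c*((a+1)*(|b|+1)) := by
    intro b
    rw [abs_mul, abs_mul, abs_of_nonneg (by norm_num : (0:ℝ) ≤ 1/2)]
    have h1 : |a-1| ≤ a+1 := abs_le.2 ⟨by linarith, by linarith⟩
    have h3 : |a-1| * |b| ≤ (a+1)*(|b|+1) :=
      mul_le_mul h1 (by linarith [abs_nonneg b]) (abs_nonneg b) (by linarith)
    have h6 : (a+1)*(|b|+1) ≤ c*((a+1)*(|b|+1)) :=
      le_mul_of_one_le_left (by positivity) hc1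
    have h7 : 0 ≤ |a-1| * |b| := mul_nonneg (abs_nonneg _) (abs_nonneg _)
    rw [mul_assoc]
    linarith
  have hscore' : ∀ b' b : ℝ, |b'| ≤ (1+K)*(1+q)*(|b|+1) →
      |1/2*(a'-1)*b'| ≤ c^2*((a+1)*(|b|+1)) := by
    intro b' b hb
    rw [abs_mul, abs_mul, abs_of_nonneg (by norm_num : (0:ℝ) ≤ 1/2)]
    have h1 : |a'-1| ≤ (1+K)*(a+1) := by
      refine abs_le.2 ⟨by nlinarith [mul_nonneg hK ha], by nlinarith [mul_nonneg hK ha]⟩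
    have h3 : |a'-1| * |b'| ≤ ((1+K)*(a+1)) * ((1+K)*(1+q)*(|b|+1)) :=
      mul_le_mul h1 hb (abs_nonneg _) (by positivity)
    have h4 : c^2*((a+1)*(|b|+1)) - 1/2*(((1+K)*(a+1)) * ((1+K)*(1+q)*(|b|+1)))
        = (1+K)^2*(1+q)*(a+1)*(|b|+1)*(q+1/2) := by
      rw [hc_def]; ring
    have h5 : (0:ℝ) ≤ (1+K)^2*(1+q)*(a+1)*(|b|+1)*(q+1/2) := by positivity
    linarith
  have hsdiff : ∀ b b' : ℝ, |b - b'| ≤ ε * |b| + ε*q →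
      |1/2*(a-1)*b - 1/2*(a'-1)*b'| ≤ ε*(c*((a+1)*(|b|+1))) := by
    intro b b' hb
    have h1 : 1/2*(a-1)*b - 1/2*(a'-1)*b' = 1/2*((a-a')*b + (a'-1)*(b-b')) := by ring
    rw [h1, abs_mul, abs_of_nonneg (by norm_num : (0:ℝ) ≤ 1/2)]
    have h2 : |(a-a')*b + (a'-1)*(b-b')| ≤ |a-a'| * |b| + |a'-1| * |b-b'| := by
      refine (abs_add_le _ _).trans ?_
      rw [abs_mul, abs_mul]
    have h3 : |a'-1| ≤ (1+K)*(a+1) :=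
      abs_le.2 ⟨by nlinarith [mul_nonneg hK ha], by nlinarith [mul_nonneg hK ha]⟩
    have h4 : |a-a'| * |b| ≤ ε*a * |b| :=
      mul_le_mul_of_nonneg_right haa' (abs_nonneg b)
    have h5 : |a'-1| * |b-b'| ≤ ((1+K)*(a+1))*(ε * |b| + ε*q) :=
      mul_le_mul h3 hb (abs_nonneg _) (by positivity)
    have h6 : ε*a*|b| + ((1+K)*(a+1))*(ε*|b| + ε*q) ≤ 2*(ε*(c*((a+1)*(|b|+1)))) := by
      have hinner : a*|b| + ((1+K)*(a+1))*(|b| + q) ≤ 2*(c*((a+1)*(|b|+1))) := by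
        rw [hc_def]
        have hB := abs_nonneg b
        have t1 : a*|b| ≤ (a+1)*(|b|+1) := by nlinarith
        have t2 : (a+1)*(|b|+1) ≤ (1+K)*(1+q)*((a+1)*(|b|+1)) :=
          le_mul_of_one_le_left (by positivity) (by nlinarith [mul_nonneg hK hq0.le])
        have t3 : |b|+q ≤ (1+q)*(|b|+1) := by nlinarith [mul_nonneg hq0.le hB]
        have t4 : (1+K)*(a+1)*(|b|+q) ≤ (1+K)*(a+1)*((1+q)*(|b|+1)) :=
          mul_le_mul_of_nonneg_left t3 (by positivity)
        have t5 : (1+K)*(a+1)*((1+q)*(|b|+1)) = (1+K)*(1+q)*((a+1)*(|b|+1)) := by ring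
        have t6 : ((1+K)*(a+1))*(|b|+q) = (1+K)*(a+1)*(|b|+q) := by ring
        linarith
      calc ε*a*|b| + ((1+K)*(a+1))*(ε*|b| + ε*q)
          = ε * (a*|b| + ((1+K)*(a+1))*(|b| + q)) := by ring
        _ ≤ ε * (2*(c*((a+1)*(|b|+1)))) := mul_le_mul_of_nonneg_left hinner hε0
        _ = 2*(ε*(c*((a+1)*(|b|+1)))) := by ring
    calc 1/2 * |(a-a')*b + (a'-1)*(b-b')| ≤ 1/2 * (|a-a'| * |b| + |a'-1| * |b-b'|) := by
          linarith
      _ ≤ 1/2 * (ε*a*|b| + ((1+K)*(a+1))*(ε*|b| + ε*q)) := by linarith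
      _ ≤ ε*(c*((a+1)*(|b|+1))) := by linarith
  -- assemble
  obtain ⟨P, hP_def⟩ : ∃ P : ℝ, P = a + 1 := ⟨_, rfl⟩
  obtain ⟨Q, hQ_def⟩ : ∃ Q : ℝ, Q = |bi| + 1 := ⟨_, rfl⟩
  obtain ⟨R, hR_def⟩ : ∃ R : ℝ, R = |bj| + 1 := ⟨_, rfl⟩
  have hP0 : 0 ≤ P := by rw [hP_def]; linarith
  have hQ0 : 0 ≤ Q := by rw [hQ_def]; positivity
  have hR0 : 0 ≤ R := by rw [hR_def]; positivity
  have hAi : |1/2*(a-1)*bi| ≤ c*(P*Q) := by rw [hP_def, hQ_def, ← mul_assoc]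
                                            simpa [mul_assoc] using hscore bi
  have hAjd : |1/2*(a-1)*bj - 1/2*(a'-1)*bj'| ≤ ε*(c*(P*R)) := by
    rw [hP_def, hR_def]; simpa using hsdiff bj bj' hbjbj'
  have hAid : |1/2*(a-1)*bi - 1/2*(a'-1)*bi'| ≤ ε*(c*(P*Q)) := by
    rw [hP_def, hQ_def]; simpa using hsdiff bi bi' hbibi'
  have hAj' : |1/2*(a'-1)*bj'| ≤ c^2*(P*R) := by
    rw [hP_def, hR_def]; simpa using hscore' bj' bj hbj'le
  have hmain : |(1/2*(a-1)*bi)*(1/2*(a-1)*bj) - (1/2*(a'-1)*bi')*(1/2*(a'-1)*bj')|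
      ≤ 2*ε*c^3*(P^2*Q*R) := by
    have hPQ : 0 ≤ P^2*Q*R := by positivity
    have hcc : 0 ≤ c^3 - c^2 := by
      have e : c^3 - c^2 = c*c*(c-1) := by ring
      rw [e]
      exact mul_nonneg (mul_nonneg hc0 hc0) (by linarith)
    have hkey : 0 ≤ ε*(c^3-c^2)*(P^2*Q*R) := by positivity
    calc |(1/2*(a-1)*bi)*(1/2*(a-1)*bj) - (1/2*(a'-1)*bi')*(1/2*(a'-1)*bj')|
        ≤ |1/2*(a-1)*bi| * |1/2*(a-1)*bj - 1/2*(a'-1)*bj'|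
          + |1/2*(a-1)*bi - 1/2*(a'-1)*bi'| * |1/2*(a'-1)*bj'| := abs_prod_diff _ _ _ _
      _ ≤ (c*(P*Q))*(ε*(c*(P*R))) + (ε*(c*(P*Q)))*(c^2*(P*R)) := by
          refine add_le_add (mul_le_mul hAi hAjd (abs_nonneg _) (by positivity))
            (mul_le_mul hAid hAj' (abs_nonneg _) (by positivity))
      _ = ε*(c^2 + c^3)*(P^2*Q*R) := by ring
      _ ≤ 2*ε*c^3*(P^2*Q*R) := by
          have e : 2*ε*c^3*(P^2*Q*R) - ε*(c^2 + c^3)*(P^2*Q*R) = ε*(c^3-c^2)*(P^2*Q*R) := by ring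
          linarith
  have hpoly : P^2*Q*R ≤ P^4 + Q^4 + R^4 := by
    nlinarith [sq_nonneg (P^2 - Q*R), sq_nonneg (Q^2 - R^2), sq_nonneg (P^2), sq_nonneg (Q^2),
      sq_nonneg (R^2), mul_nonneg hQ0 hR0]
  have hP4 : P^4 ≤ 8*(a^4 + 1) := by rw [hP_def]; exact quart_bound a ha
  have hQ4 : Q^4 ≤ 8*(|bi|^4 + 1) := by rw [hQ_def]; exact quart_bound _ (abs_nonneg bi)
  have hR4 : R^4 ≤ 8*(|bj|^4 + 1) := by rw [hR_def]; exact quart_bound _ (abs_nonneg bj)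
  have hfin : 2*ε*c^3*(P^2*Q*R) ≤ ε * (48*(1+K)^3*(1+q)^3) * (a^4 + |bi|^4 + |bj|^4 + 1) := by
    have h8 : P^2*Q*R ≤ 24*(a^4 + |bi|^4 + |bj|^4 + 1) := by
      linarith [pow_nonneg ha 4, pow_nonneg (abs_nonneg bi) 4, pow_nonneg (abs_nonneg bj) 4]
    have hc3 : c^3 = (1+K)^3*(1+q)^3 := by rw [hc_def]; ring
    calc 2*ε*c^3*(P^2*Q*R) ≤ 2*ε*c^3*(24*(a^4 + |bi|^4 + |bj|^4 + 1)) :=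
          mul_le_mul_of_nonneg_left h8 (by positivity)
      _ = ε * (48*(1+K)^3*(1+q)^3) * (a^4 + |bi|^4 + |bj|^4 + 1) := by rw [hc3]; ring
  exact hmain.trans hfin

lemma key_ineq {w K ε x S S' Di Dj Di' Dj' : ℝ}
    (hw : 0 < w) (hK : 0 ≤ K) (hε0 : 0 ≤ ε) (hεK : ε ≤ K) (hx : 0 ≤ x)
    (hS : w ≤ S) (hS' : w ≤ S')
    (hDi : |Di - Di'| ≤ ε) (hDj : |Dj - Dj'| ≤ ε) (hinv : |1/S - 1/S'| ≤ ε/S) :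
    |(1/2*(x/S-1)*(Di/S)) * (1/2*(x/S-1)*(Dj/S))
      - (1/2*(x/S'-1)*(Di'/S')) * (1/2*(x/S'-1)*(Dj'/S'))|
    ≤ ε * (48*(1+K)^3*(1+1/w)^3) * ((x/S)^4 + |Di/S|^4 + |Dj/S|^4 + 1) := by
  have hS0 : 0 < S := lt_of_lt_of_le hw hS
  have hS'0 : 0 < S' := lt_of_lt_of_le hw hS'
  have hq0 : (0:ℝ) < 1/w := by positivity
  have ha : 0 ≤ x/S := by positivity
  have ha' : 0 ≤ x/S' := by positivity
  have haa' : |x/S - x/S'| ≤ ε*(x/S) := by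
    have h1 : x/S - x/S' = x * (1/S - 1/S') := by field_simp
    rw [h1, abs_mul, abs_of_nonneg hx]
    calc x * |1/S - 1/S'| ≤ x * (ε/S) := mul_le_mul_of_nonneg_left hinv hx
      _ = ε * (x/S) := by ring
  have hinvS' : 1/S' ≤ 1/w := one_div_le_one_div_of_le hw hS'
  have hbdiff : ∀ D D' : ℝ, |D - D'| ≤ ε → |D/S - D'/S'| ≤ ε * |D/S| + ε*(1/w) := by
    intro D D' hD
    have h1 : D/S - D'/S' = D * (1/S - 1/S') + (D - D') * (1/S') := by
      field_simp; ring
    rw [h1]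
    calc |D * (1/S - 1/S') + (D - D') * (1/S')|
        ≤ |D| * |1/S - 1/S'| + |D - D'| * |1/S'| := by
          refine (abs_add_le _ _).trans ?_
          rw [abs_mul, abs_mul]
      _ ≤ |D| * (ε/S) + ε * (1/w) := by
          refine add_le_add (mul_le_mul_of_nonneg_left hinv (abs_nonneg D)) ?_
          rw [abs_of_nonneg (by positivity : (0:ℝ) ≤ 1/S')]
          exact mul_le_mul hD hinvS' (by positivity) hε0
      _ = ε * |D/S| + ε*(1/w) := by
          rw [abs_div, abs_of_pos hS0]; ring
  exact core_ineq hK hε0 hεK hq0 ha ha' haa' (hbdiff Di Di' hDi) (hbdiff Dj Dj' hDj)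


/-- Reduce a sup over an open set to a sup over a countable dense subset,
for a function continuous on the set. -/
lemma biSup_ofReal_eq_dense {m : ℕ} {N T : Set (Fin m → ℝ)} (hN : IsOpen N) (hTN : T ⊆ N)
    (hNT : N ⊆ closure T) {G : (Fin m → ℝ) → ℝ} (hG : ContinuousOn G N) :
    ⨆ θ ∈ N, ENNReal.ofReal (G θ) = ⨆ θ ∈ T, ENNReal.ofReal (G θ) := by
  apply le_antisymm
  · refine iSup₂_le fun θ hθ => ?_
    obtain ⟨u, hu, hlim⟩ := mem_closure_iff_seq_limit.1 (hNT hθ)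
    have hcont : ContinuousAt G θ := hG.continuousAt (hN.mem_nhds hθ)
    have htends : Tendsto (fun n => ENNReal.ofReal (G (u n))) atTop
        (𝓝 (ENNReal.ofReal (G θ))) :=
      (ENNReal.continuous_ofReal.continuousAt.tendsto.comp (hcont.tendsto.comp hlim))
    refine le_of_tendsto htends (Eventually.of_forall fun n => ?_)
    exact le_iSup₂ (f := fun θ _ => ENNReal.ofReal (G θ)) (u n) (hu n)
  · exact iSup₂_le fun θ hθ => le_iSup₂ (f := fun θ _ => ENNReal.ofReal (G θ)) θ (hTN hθ)

/-- Measurability in `ω` of the directional derivative of `θ ↦ F θ ω` at a point of an open set. -/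
lemma measurable_fderiv_apply {Ω : Type*} [MeasurableSpace Ω] {m : ℕ}
    {N : Set (Fin m → ℝ)} (hN : IsOpen N) {F : (Fin m → ℝ) → Ω → ℝ}
    (hmeas : ∀ θ, Measurable (F θ)) (hsmooth : ∀ ω, ContDiffOn ℝ 1 (fun θ => F θ ω) N)
    {θ : Fin m → ℝ} (hθ : θ ∈ N) (v : Fin m → ℝ) :
    Measurable (fun ω => fderiv ℝ (fun θ' => F θ' ω) θ v) := by
  have hdiff : ∀ ω, DifferentiableAt ℝ (fun θ' => F θ' ω) θ := fun ω =>
    ((hsmooth ω).differentiableOn one_ne_zero).differentiableAt (hN.mem_nhds hθ)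
  have key : ∀ ω, Tendsto
      (fun n : ℕ => ((n:ℝ)+1) * (F (θ + ((n:ℝ)+1)⁻¹ • v) ω - F θ ω))
      atTop (𝓝 (fderiv ℝ (fun θ' => F θ' ω) θ v)) := by
    intro ω
    have hline : HasDerivAt (fun s : ℝ => θ + s • v) v 0 := by
      simpa using ((hasDerivAt_id (0:ℝ)).smul_const v).const_add θ
    have h0 : θ + (0:ℝ) • v = θ := by simp
    have hF : HasFDerivAt (fun θ' => F θ' ω) (fderiv ℝ (fun θ' => F θ' ω) θ)
        (θ + (0:ℝ) • v) := by rw [h0]; exact (hdiff ω).hasFDerivAt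
    have hcomp : HasDerivAt (fun s : ℝ => F (θ + s • v) ω)
        (fderiv ℝ (fun θ' => F θ' ω) θ v) 0 := by have := hF.comp_hasDerivAt 0 hline; exact this
    have hslope := hcomp.tendsto_slope_zero
    have hseq : Tendsto (fun n : ℕ => ((n:ℝ)+1)⁻¹) atTop (𝓝[≠] (0:ℝ)) := by
      refine tendsto_nhdsWithin_of_tendsto_nhds_of_eventually_within _ ?_ ?_
      · simpa [one_div] using (tendsto_one_div_add_atTop_nhds_zero_nat :
          Tendsto (fun n : ℕ => 1 / ((n:ℝ) + 1)) atTop (𝓝 0))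
      · exact Eventually.of_forall fun n =>
          Set.mem_compl_singleton_iff.2 (by positivity : (0:ℝ) < ((n:ℝ)+1)⁻¹).ne'
    have := hslope.comp hseq
    refine this.congr fun n => ?_
    simp only [Function.comp_apply, zero_add, zero_smul, add_zero, smul_eq_mul, inv_inv]
  exact measurable_of_tendsto_metrizable
    (fun n => (measurable_const.mul ((hmeas _).sub (hmeas _))))
    (tendsto_pi_nhds.mpr key)

/-- Measurability of a biSup over an open set via a countable dense subset. -/
lemma measurable_biSup_ofReal {Ω : Type*} [MeasurableSpace Ω] {m : ℕ} {N T : Set (Fin m → ℝ)}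
    (hN : IsOpen N) (hTN : T ⊆ N) (hNT : N ⊆ closure T) (hTc : T.Countable)
    {G : (Fin m → ℝ) → Ω → ℝ}
    (hcont : ∀ ω, ContinuousOn (fun θ => G θ ω) N)
    (hmeas : ∀ θ ∈ N, Measurable (fun ω => ENNReal.ofReal (G θ ω))) :
    Measurable (fun ω => ⨆ θ ∈ N, ENNReal.ofReal (G θ ω)) := by
  have hrw : (fun ω => ⨆ θ ∈ N, ENNReal.ofReal (G θ ω))
      = fun ω => ⨆ θ ∈ T, ENNReal.ofReal (G θ ω) :=
    funext fun ω => biSup_ofReal_eq_dense hN hTN hNT (hcont ω)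
  rw [hrw]
  haveI := hTc.to_subtype
  have h2 : (fun ω => ⨆ θ ∈ T, ENNReal.ofReal (G θ ω))
      = fun ω => ⨆ θ : T, ENNReal.ofReal (G θ.1 ω) := by
    funext ω
    rw [iSup_subtype']
  rw [h2]
  exact Measurable.iSup fun θ => hmeas θ.1 (hTN θ.2)

/-- Lemma A.9, first claim (conditional form): under uniform moment bounds on
`X_t²/S_t` and `|∂ᵢS_t/S_t|` and geometric almost-sure truncation bounds, for all
coordinates `i, j`, almost surely
`Σ_{t=1}^∞ sup_{θ∈N} |∂ᵢl_t ∂ⱼl_t − ∂ᵢl̃_t ∂ⱼl̃_t| < ∞`. -/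
theorem stmt12 {Ω : Type*} [MeasurableSpace Ω] (P : Measure Ω) [IsProbabilityMeasure P]
    {m : ℕ} (N : Set (Fin m → ℝ)) (hN : IsOpen N) (w : ℝ) (hw : 0 < w)
    (X : ℕ → Ω → ℝ) (S Sa : ℕ → (Fin m → ℝ) → Ω → ℝ)
    (hXmeas : ∀ t, Measurable (X t))
    (hSsmooth : ∀ t ω, ContDiffOn ℝ 1 (fun θ => S t θ ω) N)
    (hSasmooth : ∀ t ω, ContDiffOn ℝ 1 (fun θ => Sa t θ ω) N)
    (hSw : ∀ t ω, ∀ θ ∈ N, w ≤ S t θ ω)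
    (hSaw : ∀ t ω, ∀ θ ∈ N, w ≤ Sa t θ ω)
    (hSmeas : ∀ t θ, Measurable (S t θ)) (hSameas : ∀ t θ, Measurable (Sa t θ))
    (M : ℝ → ℝ≥0∞) (hM : ∀ d : ℝ, 1 ≤ d → M d < ⊤)
    (h1 : ∀ d : ℝ, 1 ≤ d → ∀ t : ℕ, 1 ≤ t →
      ∫⁻ ω, ⨆ θ ∈ N, ENNReal.ofReal ((X t ω ^ 2 / S t θ ω) ^ d) ∂P ≤ M d)
    (h2 : ∀ d : ℝ, 1 ≤ d → ∀ t : ℕ, 1 ≤ t → ∀ i : Fin m,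
      ∫⁻ ω, ⨆ θ ∈ N, ENNReal.ofReal
        (|fderiv ℝ (fun θ' => S t θ' ω) θ (Pi.single i 1) / S t θ ω| ^ d) ∂P ≤ M d)
    (K ρ : ℝ) (hK : 0 ≤ K) (hρ : ρ ∈ Set.Ioo (0 : ℝ) 1)
    (htrunc : ∀ᵐ ω ∂P, ∀ t : ℕ, 1 ≤ t → ∀ i : Fin m, ∀ θ ∈ N,
      |fderiv ℝ (fun θ' => S t θ' ω) θ (Pi.single i 1)
          - fderiv ℝ (fun θ' => Sa t θ' ω) θ (Pi.single i 1)| ≤ K * ρ ^ t ∧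
      |1 / S t θ ω - 1 / Sa t θ ω| ≤ K * ρ ^ t / S t θ ω) :
    ∀ i j : Fin m, ∀ᵐ ω ∂P,
      (∑' t : ℕ, ⨆ θ ∈ N, ENNReal.ofReal
        |garchScore (X (t + 1)) (S (t + 1)) i θ ω * garchScore (X (t + 1)) (S (t + 1)) j θ ω
          - garchScore (X (t + 1)) (Sa (t + 1)) i θ ω *
              garchScore (X (t + 1)) (Sa (t + 1)) j θ ω|) < ⊤ := by
  obtain ⟨hρ0, hρ1⟩ := hρ
  intro i j
  obtain ⟨T, hTN, hTc, hNT⟩ :=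
    (TopologicalSpace.IsSeparable.of_separableSpace N).exists_countable_dense_subset
  have hrpow : ∀ y : ℝ, y ^ (4:ℝ) = y ^ (4:ℕ) := fun y => by
    rw [show (4:ℝ) = ((4:ℕ):ℝ) by norm_num, Real.rpow_natCast]
  have hSpos : ∀ (V : ℕ → (Fin m → ℝ) → Ω → ℝ), (∀ t ω, ∀ θ ∈ N, w ≤ V t θ ω) →
      ∀ t ω, ∀ θ ∈ N, V t θ ω ≠ 0 := fun V hV t ω θ hθ => (lt_of_lt_of_le hw (hV t ω θ hθ)).ne'
  have hcontScore : ∀ (V : ℕ → (Fin m → ℝ) → Ω → ℝ),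
      (∀ t ω, ContDiffOn ℝ 1 (fun θ => V t θ ω) N) → (∀ t ω, ∀ θ ∈ N, w ≤ V t θ ω) →
      ∀ t ω (k : Fin m), ContinuousOn (fun θ => garchScore (X t) (V t) k θ ω) N := by
    intro V hVs hVw t ω k
    have hne : ∀ θ ∈ N, V t θ ω ≠ 0 := hSpos V hVw t ω
    have hcV : ContinuousOn (fun θ => V t θ ω) N := (hVs t ω).continuousOn
    have hcD : ContinuousOn (fun θ => fderiv ℝ (fun θ' => V t θ' ω) θ (Pi.single k 1)) N :=
      (ContinuousLinearMap.apply ℝ ℝ (Pi.single k 1)).continuous.comp_continuousOn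
        ((hVs t ω).continuousOn_fderiv_of_isOpen hN le_rfl)
    exact (continuousOn_const.mul ((continuousOn_const.div hcV hne).sub
      continuousOn_const)).mul (hcD.div hcV hne)
  have hmeasScore : ∀ (V : ℕ → (Fin m → ℝ) → Ω → ℝ),
      (∀ t θ, Measurable (V t θ)) → (∀ t ω, ContDiffOn ℝ 1 (fun θ => V t θ ω) N) →
      ∀ t (k : Fin m), ∀ θ ∈ N, Measurable (fun ω => garchScore (X t) (V t) k θ ω) := by
    intro V hVm hVs t k θ hθ
    have hD : Measurable (fun ω => fderiv ℝ (fun θ' => V t θ' ω) θ (Pi.single k 1)) :=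
      measurable_fderiv_apply hN (hVm t) (hVs t) hθ (Pi.single k 1)
    exact (measurable_const.mul ((((hXmeas t).pow_const 2).div (hVm t θ)).sub
      measurable_const)).mul (hD.div (hVm t θ))
  have hGmeas : ∀ t : ℕ, Measurable (fun ω => ⨆ θ ∈ N, ENNReal.ofReal
      |garchScore (X (t + 1)) (S (t + 1)) i θ ω * garchScore (X (t + 1)) (S (t + 1)) j θ ω -
            garchScore (X (t + 1)) (Sa (t + 1)) i θ ω * garchScore (X (t + 1)) (Sa (t + 1)) j θ ω|) := by
    intro t
    refine measurable_biSup_ofReal hN hTN hNT hTc (fun ω => ?_) (fun θ hθ => ?_)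
    · exact (((hcontScore S hSsmooth hSw (t+1) ω i).mul
        (hcontScore S hSsmooth hSw (t+1) ω j)).sub
        ((hcontScore Sa hSasmooth hSaw (t+1) ω i).mul
        (hcontScore Sa hSasmooth hSaw (t+1) ω j))).abs
    · exact ((((hmeasScore S hSmeas hSsmooth (t+1) i θ hθ).mul
        (hmeasScore S hSmeas hSsmooth (t+1) j θ hθ)).sub
        ((hmeasScore Sa hSameas hSasmooth (t+1) i θ hθ).mul
        (hmeasScore Sa hSameas hSasmooth (t+1) j θ hθ))).abs).ennreal_ofReal
  obtain ⟨C, hC_def⟩ : ∃ C : ℝ, C = 48*(1+K)^3*(1+1/w)^3 := ⟨_, rfl⟩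
  have hC0 : 0 ≤ C := by rw [hC_def]; positivity
  obtain ⟨B, hB_def⟩ : ∃ B : ℝ≥0∞, B = M 4 + M 4 + M 4 + 1 := ⟨_, rfl⟩
  have hBne : B ≠ ⊤ := by
    have h4 := (hM 4 (by norm_num)).ne
    rw [hB_def]
    exact ENNReal.add_ne_top.2 ⟨ENNReal.add_ne_top.2 ⟨ENNReal.add_ne_top.2 ⟨h4, h4⟩, h4⟩,
      ENNReal.one_ne_top⟩
  have hgbound : ∀ t : ℕ, (∫⁻ ω, (⨆ θ ∈ N, ENNReal.ofReal
      |garchScore (X (t + 1)) (S (t + 1)) i θ ω * garchScore (X (t + 1)) (S (t + 1)) j θ ω -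
            garchScore (X (t + 1)) (Sa (t + 1)) i θ ω * garchScore (X (t + 1)) (Sa (t + 1)) j θ ω|) ∂P) ≤ ENNReal.ofReal (K * ρ ^ (t+1) * C) * B := by
    intro t
    have ht1 : 1 ≤ t + 1 := Nat.le_add_left 1 t
    have hε0 : 0 ≤ K * ρ ^ (t+1) := by positivity
    have hεK : K * ρ ^ (t+1) ≤ K :=
      mul_le_of_le_one_right hK (pow_le_one₀ hρ0.le hρ1.le)
    have hcS : ∀ ω, ContinuousOn (fun θ => S (t+1) θ ω) N :=
      fun ω => (hSsmooth (t+1) ω).continuousOn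
    have hSne : ∀ ω, ∀ θ ∈ N, S (t+1) θ ω ≠ 0 := fun ω => hSpos S hSw (t+1) ω
    have hcD : ∀ ω (k : Fin m), ContinuousOn
        (fun θ => fderiv ℝ (fun θ' => S (t+1) θ' ω) θ (Pi.single k 1)) N := fun ω k =>
      (ContinuousLinearMap.apply ℝ ℝ (Pi.single k 1)).continuous.comp_continuousOn
        ((hSsmooth (t+1) ω).continuousOn_fderiv_of_isOpen hN le_rfl)
    have hU1meas : Measurable (fun ω => ⨆ θ ∈ N, ENNReal.ofReal ((X (t + 1) ω ^ 2 / S (t + 1) θ ω) ^ (4:ℕ))) := by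
      refine measurable_biSup_ofReal hN hTN hNT hTc (fun ω => ?_) (fun θ hθ => ?_)
      · exact (continuousOn_const.div (hcS ω) (hSne ω)).pow 4
      · exact ((((hXmeas (t+1)).pow_const 2).div (hSmeas (t+1) θ)).pow_const 4).ennreal_ofReal
    have hU2meas : ∀ k : Fin m, Measurable (fun ω => ⨆ θ ∈ N, ENNReal.ofReal (|fderiv ℝ (fun θ' => S (t + 1) θ' ω) θ (Pi.single k 1) / S (t + 1) θ ω| ^ (4:ℕ))) := by
      intro k
      refine measurable_biSup_ofReal hN hTN hNT hTc (fun ω => ?_) (fun θ hθ => ?_)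
      · exact (((hcD ω k).div (hcS ω) (hSne ω)).abs).pow 4
      · exact ((((measurable_fderiv_apply hN (hSmeas (t+1)) (hSsmooth (t+1)) hθ
          (Pi.single k 1)).div (hSmeas (t+1) θ)).abs.pow_const 4).ennreal_ofReal)
    have hU1int : (∫⁻ ω, ⨆ θ ∈ N, ENNReal.ofReal ((X (t + 1) ω ^ 2 / S (t + 1) θ ω) ^ (4:ℕ)) ∂P) ≤ M 4 := by
      calc (∫⁻ ω, ⨆ θ ∈ N, ENNReal.ofReal ((X (t + 1) ω ^ 2 / S (t + 1) θ ω) ^ (4:ℕ)) ∂P)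
          = ∫⁻ ω, ⨆ θ ∈ N, ENNReal.ofReal ((X (t + 1) ω ^ 2 / S (t + 1) θ ω) ^ (4:ℝ)) ∂P :=
            lintegral_congr fun ω =>
              (iSup_congr fun θ => iSup_congr fun _ => by rw [hrpow]).symm
        _ ≤ M 4 := h1 4 (by norm_num) (t+1) ht1
    have hU2int : ∀ k : Fin m, (∫⁻ ω, ⨆ θ ∈ N, ENNReal.ofReal (|fderiv ℝ (fun θ' => S (t + 1) θ' ω) θ (Pi.single k 1) / S (t + 1) θ ω| ^ (4:ℕ)) ∂P) ≤ M 4 := by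
      intro k
      calc (∫⁻ ω, ⨆ θ ∈ N, ENNReal.ofReal (|fderiv ℝ (fun θ' => S (t + 1) θ' ω) θ (Pi.single k 1) / S (t + 1) θ ω| ^ (4:ℕ)) ∂P)
          = ∫⁻ ω, ⨆ θ ∈ N, ENNReal.ofReal
            (|fderiv ℝ (fun θ' => S (t + 1) θ' ω) θ (Pi.single k 1) / S (t + 1) θ ω| ^ (4:ℝ)) ∂P :=
            lintegral_congr fun ω =>
              (iSup_congr fun θ => iSup_congr fun _ => by rw [hrpow]).symm
        _ ≤ M 4 := h2 4 (by norm_num) (t+1) ht1 k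
    have hae : ∀ᵐ ω ∂P, (⨆ θ ∈ N, ENNReal.ofReal |garchScore (X (t + 1)) (S (t + 1)) i θ ω * garchScore (X (t + 1)) (S (t + 1)) j θ ω -
            garchScore (X (t + 1)) (Sa (t + 1)) i θ ω * garchScore (X (t + 1)) (Sa (t + 1)) j θ ω|)
        ≤ ENNReal.ofReal (K * ρ ^ (t+1) * C) *
          ((⨆ θ ∈ N, ENNReal.ofReal ((X (t + 1) ω ^ 2 / S (t + 1) θ ω) ^ (4:ℕ))) + (⨆ θ ∈ N, ENNReal.ofReal (|fderiv ℝ (fun θ' => S (t + 1) θ' ω) θ (Pi.single i 1) / S (t + 1) θ ω| ^ (4:ℕ))) + (⨆ θ ∈ N, ENNReal.ofReal (|fderiv ℝ (fun θ' => S (t + 1) θ' ω) θ (Pi.single j 1) / S (t + 1) θ ω| ^ (4:ℕ))) + 1) := by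
      filter_upwards [htrunc] with ω hω
      refine iSup₂_le fun θ hθ => ?_
      obtain ⟨hDi, hinv⟩ := hω (t+1) ht1 i θ hθ
      obtain ⟨hDj, -⟩ := hω (t+1) ht1 j θ hθ
      have hkey := key_ineq (K := K) hw hK hε0 hεK (sq_nonneg (X (t+1) ω))
        (hSw (t+1) ω θ hθ) (hSaw (t+1) ω θ hθ) hDi hDj hinv
      have hkey' : |garchScore (X (t + 1)) (S (t + 1)) i θ ω * garchScore (X (t + 1)) (S (t + 1)) j θ ω -
            garchScore (X (t + 1)) (Sa (t + 1)) i θ ω * garchScore (X (t + 1)) (Sa (t + 1)) j θ ω| ≤ K * ρ ^ (t+1) * C *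
          ((X (t + 1) ω ^ 2 / S (t + 1) θ ω) ^ (4:ℕ)
            + |fderiv ℝ (fun θ' => S (t + 1) θ' ω) θ (Pi.single i 1) / S (t + 1) θ ω| ^ (4:ℕ)
            + |fderiv ℝ (fun θ' => S (t + 1) θ' ω) θ (Pi.single j 1) / S (t + 1) θ ω| ^ (4:ℕ) + 1) := by
        rw [hC_def]
        simpa only [garchScore, sq] using hkey
      calc ENNReal.ofReal |garchScore (X (t + 1)) (S (t + 1)) i θ ω * garchScore (X (t + 1)) (S (t + 1)) j θ ω -
            garchScore (X (t + 1)) (Sa (t + 1)) i θ ω * garchScore (X (t + 1)) (Sa (t + 1)) j θ ω|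
          ≤ ENNReal.ofReal (K * ρ ^ (t+1) * C *
            ((X (t + 1) ω ^ 2 / S (t + 1) θ ω) ^ (4:ℕ)
              + |fderiv ℝ (fun θ' => S (t + 1) θ' ω) θ (Pi.single i 1) / S (t + 1) θ ω| ^ (4:ℕ)
              + |fderiv ℝ (fun θ' => S (t + 1) θ' ω) θ (Pi.single j 1) / S (t + 1) θ ω| ^ (4:ℕ) + 1)) := ENNReal.ofReal_le_ofReal hkey'
        _ = ENNReal.ofReal (K * ρ ^ (t+1) * C) *
            ENNReal.ofReal ((X (t + 1) ω ^ 2 / S (t + 1) θ ω) ^ (4:ℕ)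
              + |fderiv ℝ (fun θ' => S (t + 1) θ' ω) θ (Pi.single i 1) / S (t + 1) θ ω| ^ (4:ℕ)
              + |fderiv ℝ (fun θ' => S (t + 1) θ' ω) θ (Pi.single j 1) / S (t + 1) θ ω| ^ (4:ℕ) + 1) :=
            ENNReal.ofReal_mul (by positivity)
        _ ≤ ENNReal.ofReal (K * ρ ^ (t+1) * C) *
            ((⨆ θ ∈ N, ENNReal.ofReal ((X (t + 1) ω ^ 2 / S (t + 1) θ ω) ^ (4:ℕ))) + (⨆ θ ∈ N, ENNReal.ofReal (|fderiv ℝ (fun θ' => S (t + 1) θ' ω) θ (Pi.single i 1) / S (t + 1) θ ω| ^ (4:ℕ))) + (⨆ θ ∈ N, ENNReal.ofReal (|fderiv ℝ (fun θ' => S (t + 1) θ' ω) θ (Pi.single j 1) / S (t + 1) θ ω| ^ (4:ℕ))) + 1) := by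
            refine mul_le_mul_right ?_ _
            have e1 : ENNReal.ofReal ((X (t + 1) ω ^ 2 / S (t + 1) θ ω) ^ (4:ℕ)
                + |fderiv ℝ (fun θ' => S (t + 1) θ' ω) θ (Pi.single i 1) / S (t + 1) θ ω| ^ (4:ℕ)
                + |fderiv ℝ (fun θ' => S (t + 1) θ' ω) θ (Pi.single j 1) / S (t + 1) θ ω| ^ (4:ℕ) + 1)
                = ENNReal.ofReal ((X (t + 1) ω ^ 2 / S (t + 1) θ ω) ^ (4:ℕ))
                  + ENNReal.ofReal (|fderiv ℝ (fun θ' => S (t + 1) θ' ω) θ (Pi.single i 1) / S (t + 1) θ ω| ^ (4:ℕ))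
                  + ENNReal.ofReal (|fderiv ℝ (fun θ' => S (t + 1) θ' ω) θ (Pi.single j 1) / S (t + 1) θ ω| ^ (4:ℕ)) + 1 := by
              rw [ENNReal.ofReal_add (by positivity) zero_le_one,
                ENNReal.ofReal_add (by positivity) (by positivity),
                ENNReal.ofReal_add (by positivity) (by positivity), ENNReal.ofReal_one]
            rw [e1]
            refine add_le_add (add_le_add (add_le_add ?_ ?_) ?_) le_rfl
            · exact le_iSup₂ (f := fun θ (_ : θ ∈ N) => ENNReal.ofReal ((X (t + 1) ω ^ 2 / S (t + 1) θ ω) ^ (4:ℕ))) θ hθ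
            · exact le_iSup₂ (f := fun θ (_ : θ ∈ N) => ENNReal.ofReal (|fderiv ℝ (fun θ' => S (t + 1) θ' ω) θ (Pi.single i 1) / S (t + 1) θ ω| ^ (4:ℕ))) θ hθ
            · exact le_iSup₂ (f := fun θ (_ : θ ∈ N) => ENNReal.ofReal (|fderiv ℝ (fun θ' => S (t + 1) θ' ω) θ (Pi.single j 1) / S (t + 1) θ ω| ^ (4:ℕ))) θ hθ
    calc (∫⁻ ω, (⨆ θ ∈ N, ENNReal.ofReal |garchScore (X (t + 1)) (S (t + 1)) i θ ω * garchScore (X (t + 1)) (S (t + 1)) j θ ω -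
            garchScore (X (t + 1)) (Sa (t + 1)) i θ ω * garchScore (X (t + 1)) (Sa (t + 1)) j θ ω|) ∂P)
        ≤ ∫⁻ ω, ENNReal.ofReal (K * ρ ^ (t+1) * C) *
          ((⨆ θ ∈ N, ENNReal.ofReal ((X (t + 1) ω ^ 2 / S (t + 1) θ ω) ^ (4:ℕ))) + (⨆ θ ∈ N, ENNReal.ofReal (|fderiv ℝ (fun θ' => S (t + 1) θ' ω) θ (Pi.single i 1) / S (t + 1) θ ω| ^ (4:ℕ))) + (⨆ θ ∈ N, ENNReal.ofReal (|fderiv ℝ (fun θ' => S (t + 1) θ' ω) θ (Pi.single j 1) / S (t + 1) θ ω| ^ (4:ℕ))) + 1) ∂P :=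
          lintegral_mono_ae hae
      _ = ENNReal.ofReal (K * ρ ^ (t+1) * C) *
          ∫⁻ ω, ((⨆ θ ∈ N, ENNReal.ofReal ((X (t + 1) ω ^ 2 / S (t + 1) θ ω) ^ (4:ℕ))) + (⨆ θ ∈ N, ENNReal.ofReal (|fderiv ℝ (fun θ' => S (t + 1) θ' ω) θ (Pi.single i 1) / S (t + 1) θ ω| ^ (4:ℕ))) + (⨆ θ ∈ N, ENNReal.ofReal (|fderiv ℝ (fun θ' => S (t + 1) θ' ω) θ (Pi.single j 1) / S (t + 1) θ ω| ^ (4:ℕ))) + 1) ∂P :=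
          lintegral_const_mul' _ _ ENNReal.ofReal_ne_top
      _ ≤ ENNReal.ofReal (K * ρ ^ (t+1) * C) * B := by
          refine mul_le_mul_right ?_ _
          rw [hB_def]
          rw [lintegral_add_left (((hU1meas.fun_add (hU2meas i)).fun_add (hU2meas j))) (fun _ => 1),
            lintegral_add_left ((hU1meas.fun_add (hU2meas i))),
            lintegral_add_left hU1meas, lintegral_one, measure_univ]
          exact add_le_add (add_le_add (add_le_add hU1int (hU2int i)) (hU2int j)) le_rfl
  have hsum_meas : Measurable (fun ω => ∑' t : ℕ, ⨆ θ ∈ N, ENNReal.ofReal |garchScore (X (t + 1)) (S (t + 1)) i θ ω * garchScore (X (t + 1)) (S (t + 1)) j θ ω -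
            garchScore (X (t + 1)) (Sa (t + 1)) i θ ω * garchScore (X (t + 1)) (Sa (t + 1)) j θ ω|) :=
    Measurable.ennreal_tsum hGmeas
  refine ae_lt_top hsum_meas ?_
  rw [lintegral_tsum (fun t => (hGmeas t).aemeasurable)]
  refine ne_top_of_le_ne_top ?_ (ENNReal.tsum_le_tsum hgbound)
  have hterm : ∀ t : ℕ, ENNReal.ofReal (K * ρ ^ (t+1) * C) * B
      ≤ (ENNReal.ofReal (K * C) * B) * (ENNReal.ofReal ρ) ^ t := by
    intro t
    have e : K * ρ ^ (t+1) * C = (K * C) * ρ ^ t * ρ := by ring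
    rw [e, ENNReal.ofReal_mul (by positivity), ENNReal.ofReal_mul (by positivity),
      ENNReal.ofReal_pow hρ0.le]
    have hρle : ENNReal.ofReal ρ ≤ 1 := ENNReal.ofReal_le_one.2 hρ1.le
    calc ENNReal.ofReal (K * C) * (ENNReal.ofReal ρ) ^ t * ENNReal.ofReal ρ * B
        ≤ ENNReal.ofReal (K * C) * (ENNReal.ofReal ρ) ^ t * 1 * B :=
          mul_le_mul_left (mul_le_mul_right hρle _) _
      _ = (ENNReal.ofReal (K * C) * B) * (ENNReal.ofReal ρ) ^ t := by ring
  refine ne_top_of_le_ne_top ?_ (ENNReal.tsum_le_tsum hterm)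
  rw [ENNReal.tsum_mul_left, ENNReal.tsum_geometric]
  refine ENNReal.mul_ne_top (ENNReal.mul_ne_top ENNReal.ofReal_ne_top hBne) ?_
  exact (ENNReal.inv_ne_top).2 (tsub_pos_of_lt (ENNReal.ofReal_lt_one.2 hρ1)).ne'
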